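/- Let B be a real p×q matrix, n ≥ 1, and k a positive divisor of n. If x ∈ ℝ^p and y ∈ ℝ^q satisfy B y = λ x and Bᵀ x = λ y, then the vector v indexed by (Fin (n/k) × Fin p) ⊕ (Fin k × Fin q), with v(inl (i,a)) = √k · x a and v(inr (j,b)) = √(n/k) · y b, satisfies F_k · v = (√n · λ) · v. -/
import Mathlib


open Matrix

/-- The matrix `F_k` of the generalization of Construction I: indexed by
`(Fin (n/k) × Fin p) ⊕ (Fin k × Fin q)`, with a copy of `B` between every `p`-block and every
`q`-block, and zero blocks otherwise. -/
def matF (p q n k : ℕ) (B : Matrix (Fin p) (Fin q) ℝ) :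
    Matrix ((Fin (n / k) × Fin p) ⊕ Fin k × Fin q) ((Fin (n / k) × Fin p) ⊕ Fin k × Fin q) ℝ :=
  Matrix.of fun a b =>
    match a, b with
    | Sum.inl (_, i), Sum.inr (_, j) => B i j
    | Sum.inr (_, j), Sum.inl (_, i) => B i j
    | _, _ => 0

lemma matF_ll (p q n k : ℕ) (B : Matrix (Fin p) (Fin q) ℝ) (i j : Fin (n/k)) (a b : Fin p) :
    matF p q n k B (Sum.inl (i, a)) (Sum.inl (j, b)) = 0 := rfl

lemma matF_rr (p q n k : ℕ) (B : Matrix (Fin p) (Fin q) ℝ) (i j : Fin k) (a b : Fin q) :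
    matF p q n k B (Sum.inr (i, a)) (Sum.inr (j, b)) = 0 := rfl

lemma matF_lr (p q n k : ℕ) (B : Matrix (Fin p) (Fin q) ℝ) (i : Fin (n/k)) (j : Fin k)
    (a : Fin p) (b : Fin q) :
    matF p q n k B (Sum.inl (i, a)) (Sum.inr (j, b)) = B a b := rfl

lemma matF_rl (p q n k : ℕ) (B : Matrix (Fin p) (Fin q) ℝ) (i : Fin (n/k)) (j : Fin k)
    (a : Fin p) (b : Fin q) :
    matF p q n k B (Sum.inr (j, b)) (Sum.inl (i, a)) = B a b := rfl

/-- If `(x, y)` is an eigenvector of `[[0, B], [Bᵀ, 0]]` with eigenvalue `λ`, then the vector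
`v` with `v(inl (i,a)) = √k · x a` and `v(inr (j,b)) = √(n/k) · y b` is an eigenvector of `F_k`
with eigenvalue `√n · λ`. -/
theorem matF_eigenvector (p q n k : ℕ) (hn : 1 ≤ n) (hk : k ∣ n) (hk1 : 1 ≤ k)
    (B : Matrix (Fin p) (Fin q) ℝ) (x : Fin p → ℝ) (y : Fin q → ℝ) (l : ℝ)
    (hBy : B *ᵥ y = l • x) (hBTx : Bᵀ *ᵥ x = l • y) :
    matF p q n k B *ᵥ
        Sum.elim (fun ia => Real.sqrt k * x ia.2) (fun jb => Real.sqrt (n / k : ℕ) * y jb.2) =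
      (Real.sqrt n * l) •
        Sum.elim (fun ia => Real.sqrt k * x ia.2) (fun jb => Real.sqrt (n / k : ℕ) * y jb.2) := by
  have hk0 : (0:ℝ) ≤ (k:ℝ) := Nat.cast_nonneg k
  have hnk0 : (0:ℝ) ≤ ((n/k : ℕ):ℝ) := Nat.cast_nonneg _
  have hsq : Real.sqrt n = Real.sqrt k * Real.sqrt ((n/k : ℕ)) := by
    rw [← Real.sqrt_mul hk0, ← Nat.cast_mul, Nat.mul_div_cancel' hk]
  have hkk : Real.sqrt k * Real.sqrt k = (k:ℝ) := Real.mul_self_sqrt hk0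
  have hnknk : Real.sqrt ((n/k:ℕ)) * Real.sqrt ((n/k:ℕ)) = ((n/k:ℕ):ℝ) :=
    Real.mul_self_sqrt hnk0
  funext s
  cases s with
  | inl ia =>
    obtain ⟨i, a⟩ := ia
    have h1 : ∑ b, B a b * y b = l * x a := by
      have := congrFun hBy a
      simpa [mulVec, dotProduct] using this
    simp only [mulVec, dotProduct, Fintype.sum_sum_type, Fintype.sum_prod_type,
      matF_ll, matF_lr, Sum.elim_inl, Sum.elim_inr, Pi.smul_apply, smul_eq_mul,
      zero_mul, Finset.sum_const_zero, zero_add]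
    have : ∀ j : Fin k, ∑ b, B a b * (Real.sqrt (n/k:ℕ) * y b)
        = Real.sqrt (n/k:ℕ) * (l * x a) := by
      intro j
      rw [← h1, Finset.mul_sum]
      congr 1; funext b; ring
    rw [Finset.sum_congr rfl fun j _ => this j, Finset.sum_const, Finset.card_univ,
      Fintype.card_fin, nsmul_eq_mul, hsq]
    linear_combination (-(Real.sqrt ((n/k:ℕ)) * l * x a)) * hkk
  | inr jb =>
    obtain ⟨j, b⟩ := jb
    have h1 : ∑ a, B a b * x a = l * y b := by
      have := congrFun hBTx b
      simpa [mulVec, dotProduct, transpose_apply] using this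
    simp only [mulVec, dotProduct, Fintype.sum_sum_type, Fintype.sum_prod_type,
      matF_rr, matF_rl, Sum.elim_inl, Sum.elim_inr, Pi.smul_apply, smul_eq_mul,
      zero_mul, Finset.sum_const_zero, add_zero]
    have : ∀ i : Fin (n/k), ∑ a, B a b * (Real.sqrt k * x a)
        = Real.sqrt k * (l * y b) := by
      intro i
      rw [← h1, Finset.mul_sum]
      congr 1; funext a; ring
    rw [Finset.sum_congr rfl fun i _ => this i, Finset.sum_const, Finset.card_univ,
      Fintype.card_fin, nsmul_eq_mul, hsq]
    linear_combination (-(Real.sqrt k * l * y b)) * hnknk
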